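/- Let L be a nondegenerate even lattice of rank n and let h ∈ L be a primitive vector with (h,h) = 2d ≠ 0. Let L_h = {x ∈ L : (x,h) = 0} be the orthogonal complement of h in L, a free ℤ-module of rank n − 1 with the induced bilinear form. Then |det L_h| = |2d| · |det L| / div(h)², where det L (resp. det L_h) is the determinant of the Gram matrix of any ℤ-basis of L (resp. L_h) and div(h) is the positive generator of the ideal (h, L) ⊆ ℤ. -/

import Mathlib

lemma gram_transform {L : Type*} [AddCommGroup L] [Module ℤ L] {ι : Type*} [Fintype ι]
    [DecidableEq ι] (B : L →ₗ[ℤ] L →ₗ[ℤ] ℤ) (e : Module.Basis ι ℤ L) (f : ι → L) :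
    (Matrix.of (fun i j => B (f i) (f j))) =
      (Matrix.of (fun i j => (e.repr (f i)) j)) * (Matrix.of (fun i j => B (e i) (e j))) *
        (Matrix.of (fun i j => (e.repr (f i)) j)).transpose := by
  ext i j
  simp only [Matrix.mul_apply, Matrix.transpose_apply, Matrix.of_apply]
  conv_lhs => rw [← e.sum_repr (f i), ← e.sum_repr (f j)]
  simp [map_sum, Finset.mul_sum, Finset.sum_mul]
  conv_lhs => rw [← e.sum_repr (f i), ← e.sum_repr (f j)]
  simp only [map_sum, map_smul, LinearMap.sum_apply, LinearMap.smul_apply, smul_eq_mul, Finset.mul_sum]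
  exact Finset.sum_congr rfl fun _ _ => Finset.sum_congr rfl fun _ _ => by ring

lemma bridge {M : Type*} [AddCommGroup M] {inst : Module ℤ M} (n : ℤ) (x : M) :
    @HSMul.hSMul ℤ M M (@instHSMul ℤ M (@SemigroupAction.toSMul ℤ M _ (@MulAction.toSemigroupAction ℤ M _
      (@DistribMulAction.toMulAction ℤ M _ _ (@Module.toDistribMulAction ℤ M _ _ inst))))) n x
      = n • x := by
  letI := inst
  have := Int.cast_smul_eq_zsmul ℤ n x
  rwa [Int.cast_id] at this

theorem statement18 {L : Type*} [AddCommGroup L] [Module ℤ L]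
    (n : ℕ) (b : Module.Basis (Fin n) ℤ L)
    (B : L →ₗ[ℤ] L →ₗ[ℤ] ℤ)
    (hsymm : ∀ x y : L, B x y = B y x)
    (hnondeg : ∀ x : L, (∀ y : L, B x y = 0) → x = 0)
    (heven : ∀ x : L, 2 ∣ B x x)
    (h : L)
    (hprim : ∀ a : ℤ, a ≠ 0 → ∀ x : L, (∃ e : ℤ, a • x = e • h) → ∃ c : ℤ, x = c • h)
    (d : ℤ) (hd : d ≠ 0) (hhh : B h h = 2 * d)
    (c : Module.Basis (Fin (n - 1)) ℤ (LinearMap.ker (B h)))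
    (dv : ℤ) (hdv : 0 < dv) (hdvd : ∀ x : L, dv ∣ B h x) (hgen : ∃ x : L, B h x = dv) :
    ((|(Matrix.of fun i j => B (c i : L) (c j : L)).det| : ℤ) : ℚ) =
      ((|2 * d| * |(Matrix.of fun i j => B (b i) (b j)).det| : ℤ) : ℚ) / ((dv : ℚ) ^ 2) := by
  classical
  have h2d : (2 : ℤ) * d ≠ 0 := by simp [hd]
  have hdvne : dv ≠ 0 := hdv.ne'
  -- n ≥ 1
  have hn : 1 ≤ n := by
    by_contra hc
    have hn0 : n = 0 := by omega
    subst hn0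
    have h0 : h = 0 := by
      have := b.sum_repr h
      simpa using this.symm
    rw [h0] at hhh
    simp only [map_zero, LinearMap.zero_apply] at hhh
    exact h2d hhh.symm
  obtain ⟨x₀, hx₀⟩ := hgen
  set k : ℤ := (2 * d) / dv with hkdef
  have hdvd2d : dv ∣ 2 * d := hhh ▸ hdvd h
  have hk : dv * k = 2 * d := Int.mul_ediv_cancel' hdvd2d
  set g : (Fin (n - 1) ⊕ Unit) → L := Sum.elim (fun i => (c i : L)) (fun _ => x₀) with hgdef
  have hgc : ∀ i, B h (c i : L) = 0 := fun i => LinearMap.mem_ker.mp (c i).2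
  -- span
  have hker_span : ∀ x : L, B h x = 0 → x ∈ Submodule.span ℤ (Set.range g) := by
    intro x hx
    have hxm : x ∈ LinearMap.ker (B h) := LinearMap.mem_ker.mpr hx
    obtain ⟨xx, hxx⟩ : ∃ y : {y : L // y ∈ LinearMap.ker (B h)}, (y : L) = x := ⟨⟨x, hxm⟩, rfl⟩
    have hrep := c.sum_repr xx
    have h2 := congrArg (Subtype.val) hrep
    rw [AddSubmonoidClass.coe_finset_sum] at h2
    rw [← hxx, ← h2]
    refine Submodule.sum_mem _ fun i _ => ?_
    have : ((c.repr xx i • c i : LinearMap.ker (B h)) : L) = c.repr xx i • (c i : L) := rfl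
    rw [this]
    exact zsmul_mem (Submodule.subset_span (show (c i : L) ∈ Set.range g from ⟨Sum.inl i, rfl⟩)) _
  have hspan : ⊤ ≤ Submodule.span ℤ (Set.range g) := by
    intro x _
    have hx : B h (x - (B h x / dv) • x₀) = 0 := by
      rw [map_sub, map_zsmul, hx₀, zsmul_eq_mul, Int.cast_id,
        Int.ediv_mul_cancel (hdvd x), sub_self]
    have h1 := hker_span _ hx
    have h2 : x₀ ∈ Submodule.span ℤ (Set.range g) :=
      Submodule.subset_span (show x₀ ∈ Set.range g from ⟨Sum.inr (), rfl⟩)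
    have hxeq : x = (x - (B h x / dv) • x₀) + (B h x / dv) • x₀ := by abel
    rw [hxeq]
    exact Submodule.add_mem _ h1 (zsmul_mem h2 _)
  -- linear independence
  have hli : LinearIndependent ℤ g := by
    rw [Fintype.linearIndependent_iff]
    intro a ha
    have h0 : a (Sum.inr ()) = 0 := by
      have hBa := congrArg (B h) ha
      rw [map_sum, map_zero] at hBa
      simp only [map_smul, Fintype.sum_sum_type, hgdef, Sum.elim_inl, Sum.elim_inr,
        hgc, hx₀, smul_eq_mul, mul_zero, Finset.sum_const_zero, zero_add,
        Finset.univ_unique, Finset.sum_singleton] at hBa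
      exact (mul_eq_zero.mp hBa).resolve_right hdvne
    have hsum : ∑ i, a (Sum.inl i) • c i = (0 : {y : L // y ∈ LinearMap.ker (B h)}) := by
      apply Subtype.ext
      rw [AddSubmonoidClass.coe_finset_sum]
      rw [Fintype.sum_sum_type] at ha
      simp only [bridge, Finset.univ_unique, Finset.sum_singleton,
        show (default : Unit) = () from rfl, h0, zero_zsmul, add_zero] at ha
      have : ∀ i, ((a (Sum.inl i) • c i : LinearMap.ker (B h)) : L)
          = a (Sum.inl i) • (c i : L) := fun i => rfl
      simp only [this]
      simpa [hgdef] using ha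
    have hall := Fintype.linearIndependent_iff.mp c.linearIndependent
      (fun i => a (Sum.inl i)) hsum
    intro j
    rcases j with i | u
    · exact hall i
    · cases u; exact h0
  -- the new basis
  let b' : Module.Basis (Fin (n - 1) ⊕ Unit) ℤ L := Module.Basis.mk hli hspan
  have hb' : ∀ j, b' j = g j := fun j => Module.Basis.mk_apply hli hspan j
  have hcard : Fintype.card (Fin n) = Fintype.card (Fin (n - 1) ⊕ Unit) := by
    simp; omega
  let eqv : Fin n ≃ (Fin (n - 1) ⊕ Unit) := Fintype.equivOfCardEq hcard
  let bι : Module.Basis (Fin (n - 1) ⊕ Unit) ℤ L := b.reindex eqv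
  set Gb : Matrix (Fin n) (Fin n) ℤ := Matrix.of fun i j => B (b i) (b j) with hGb
  set Gc : Matrix (Fin (n - 1)) (Fin (n - 1)) ℤ :=
    Matrix.of fun i j => B (c i : L) (c j : L) with hGcdef
  set Gb' : Matrix (Fin (n - 1) ⊕ Unit) (Fin (n - 1) ⊕ Unit) ℤ :=
    Matrix.of fun i j => B (b' i) (b' j) with hGb'
  -- reindexed Gram matrix has the same determinant
  have hGbι : (Matrix.of fun i j => B (bι i) (bι j)).det = Gb.det := by
    have : (Matrix.of fun i j => B (bι i) (bι j))
        = Gb.submatrix eqv.symm eqv.symm := by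
      ext i j
      simp [bι, Module.Basis.reindex_apply, hGb]
    rw [this, Matrix.det_submatrix_equiv_self]
  -- change of basis between b' and bι is unimodular
  set T : Matrix (Fin (n - 1) ⊕ Unit) (Fin (n - 1) ⊕ Unit) ℤ :=
    Matrix.of fun i j => b'.repr (bι i) j with hT
  have hTgram := gram_transform B b' bι
  have hTunit : IsUnit T.det := by
    have htr : T.transpose = b'.toMatrix bι := by
      ext i j
      simp [hT, Module.Basis.toMatrix_apply, Matrix.transpose_apply]
    have hmul : b'.toMatrix bι * bι.toMatrix b' = 1 :=
      Module.Basis.toMatrix_mul_toMatrix_flip b' bι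
    have : T.transpose.det * (bι.toMatrix b').det = 1 := by
      rw [htr, ← Matrix.det_mul, hmul, Matrix.det_one]
    rw [Matrix.det_transpose] at this
    exact IsUnit.of_mul_eq_one _ this
  have hTsq : T.det * T.det = 1 := by
    rcases Int.isUnit_iff.mp hTunit with h1 | h1 <;> rw [h1] <;> norm_num
  have hGbeq : Gb.det = Gb'.det := by
    have := congrArg Matrix.det hTgram
    rw [hGbι] at this
    rw [this, Matrix.det_mul, Matrix.det_mul, Matrix.det_transpose]
    have : T.det * Gb'.det * T.det = (T.det * T.det) * Gb'.det := by ring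
    rw [this, hTsq, one_mul]
  -- the family (c, h)
  set f : (Fin (n - 1) ⊕ Unit) → L := Sum.elim (fun i => (c i : L)) (fun _ => h) with hfdef
  set N : Matrix (Fin (n - 1) ⊕ Unit) (Fin (n - 1) ⊕ Unit) ℤ :=
    Matrix.of fun i j => b'.repr (f i) j with hNdef
  have hNgram := gram_transform B b' f
  have hBb'l : ∀ i, B h (b' (Sum.inl i)) = 0 := by
    intro i; rw [hb', hgdef]; exact hgc i
  have hBb'r : B h (b' (Sum.inr ())) = dv := by
    rw [hb', hgdef]; exact hx₀
  have hNcol : ∀ i, N i (Sum.inr ()) * dv = B h (f i) := by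
    intro i
    conv_rhs => rw [← b'.sum_repr (f i)]
    rw [map_sum]
    simp only [map_smul, Fintype.sum_sum_type, hBb'l, smul_eq_mul, mul_zero,
      Finset.sum_const_zero, zero_add, Finset.univ_unique, Finset.sum_singleton,
      show (default : Unit) = () from rfl, hBb'r]
    rfl
  have hNinl : ∀ i j, N (Sum.inl i) j = if Sum.inl i = j then 1 else 0 := by
    intro i j
    have : f (Sum.inl i) = b' (Sum.inl i) := by rw [hb']; simp [hfdef, hgdef]
    rw [hNdef]
    simp only [Matrix.of_apply, this, Module.Basis.repr_self]
    exact Finsupp.single_apply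
  have hN : N = Matrix.fromBlocks 1 0
      (Matrix.of fun _ j => N (Sum.inr ()) (Sum.inl j)) (Matrix.of fun _ _ => k) := by
    ext i j
    rcases i with i | u <;> rcases j with j | v
    · rw [hNinl]
      simp [Matrix.one_apply, Sum.inl.injEq]
    · rw [hNinl]
      simp
    · cases u; rfl
    · cases u; cases v
      have h1 := hNcol (Sum.inr ())
      rw [hfdef] at h1
      simp only [Sum.elim_inr, hhh] at h1
      have h2 : N (Sum.inr ()) (Sum.inr ()) * dv = k * dv := by
        rw [h1, ← hk]; ring
      have := mul_right_cancel₀ hdvne h2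
      simpa using this
  have hNdet : N.det = k := by
    rw [hN, Matrix.det_fromBlocks_zero₁₂, Matrix.det_one, one_mul, Matrix.det_unique]
    rfl
  -- the Gram matrix of f is block diagonal
  have hGf : (Matrix.of fun i j => B (f i) (f j)) = Matrix.fromBlocks Gc 0 0
      (Matrix.of fun _ _ => 2 * d) := by
    ext i j
    rcases i with i | u <;> rcases j with j | v
    · rfl
    · simp only [Matrix.of_apply, hfdef, Sum.elim_inl, Sum.elim_inr,
        Matrix.fromBlocks_apply₁₂]
      rw [hsymm]
      simpa using hgc i
    · simp only [Matrix.of_apply, hfdef, Sum.elim_inl, Sum.elim_inr,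
        Matrix.fromBlocks_apply₂₁]
      simpa using hgc j
    · simp only [Matrix.of_apply, hfdef, Sum.elim_inr, Matrix.fromBlocks_apply₂₂]
      exact hhh
  have hGfdet : (Matrix.of fun i j => B (f i) (f j)).det = Gc.det * (2 * d) := by
    rw [hGf, Matrix.det_fromBlocks_zero₁₂]
    congr 1
    rw [Matrix.det_unique]
    rfl
  -- the key identity
  have key : Gc.det * (2 * d) = k * k * Gb.det := by
    have := congrArg Matrix.det hNgram
    rw [hGfdet, Matrix.det_mul, Matrix.det_mul, Matrix.det_transpose, hNdet, ← hGbeq] at this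
    rw [this]; ring
  -- conclude
  have hZ : |Gc.det| * dv ^ 2 = |2 * d| * |Gb.det| := by
    have habs : |2 * d| * (|Gc.det| * dv ^ 2) = |2 * d| * (|2 * d| * |Gb.det|) := by
      have e1 : |Gc.det| * |2 * d| = |Gc.det * (2 * d)| := (abs_mul _ _).symm
      have e2 : |Gc.det * (2 * d)| = |k * k * Gb.det| := by rw [key]
      have e3 : |k * k * Gb.det| = k * k * |Gb.det| := by
        rw [abs_mul, abs_mul, abs_mul_abs_self]
      have e4 : (dv * k) * (dv * k) = |2 * d| * |2 * d| := by
        rw [hk, abs_mul_abs_self]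
      calc |2 * d| * (|Gc.det| * dv ^ 2) = (|Gc.det| * |2 * d|) * dv ^ 2 := by ring
        _ = (k * k * |Gb.det|) * dv ^ 2 := by rw [e1, e2, e3]
        _ = ((dv * k) * (dv * k)) * |Gb.det| := by ring
        _ = (|2 * d| * |2 * d|) * |Gb.det| := by rw [e4]
        _ = |2 * d| * (|2 * d| * |Gb.det|) := by ring
    exact mul_left_cancel₀ (abs_ne_zero.mpr h2d) habs
  rw [eq_div_iff (by positivity : ((dv : ℚ) ^ 2) ≠ 0)]
  exact_mod_cast congrArg (fun z : ℤ => (z : ℚ)) hZ
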